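/- Let σ be a policy, s ∈ S a state, and f1, f2 parameterizations of a tree template 𝒫, where f1 evaluates the unprimed variables and f2 evaluates the primed variables. Then (f1, f2) satisfies the disjunction φ^act_{s,σ(s)} ∨ φ'^act_{s,σ(s)} if and only if σ(s) ∈ {σ_{𝒫(f1)}(s), σ_{𝒫(f2)}(s)}. -/

import Mathlib

namespace Paper9

/-- A decision tree for an MDP whose states are valuations of the variables in `Var`:
leaves carry actions from `A`, inner nodes carry a state predicate `v ≤ b`
(a variable `v : Var` together with an integer bound `b`); the left subtree
corresponds to states satisfying the predicate, the right subtree to the others. -/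
inductive DT (Var A : Type) : Type
  | leaf (a : A)
  | node (v : Var) (b : ℤ) (l r : DT Var A)

variable {Var A : Type}

/-- Evaluation of a decision tree on a state (valuation): follow the predicates
from the root to a leaf and return the leaf's action. -/
def DT.eval : DT Var A → (Var → ℤ) → A
  | .leaf a, _ => a
  | .node v b l r, s => if s v ≤ b then l.eval s else r.eval s

/-- Depth of a decision tree. -/
def DT.depth : DT Var A → ℕ
  | .leaf _ => 0
  | .node _ _ l r => max l.depth r.depth + 1

/-- `t.IsLeafAt π` holds iff the path `π` (list of booleans; `true` = go left)
leads from the root of `t` to a leaf. -/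
def DT.IsLeafAt : DT Var A → List Bool → Prop
  | .leaf _, [] => True
  | .node _ _ l _, true :: p => l.IsLeafAt p
  | .node _ _ _ r, false :: p => r.IsLeafAt p
  | _, _ => False

/-- The set of states (within the state space `X`) corresponding to the node of the
tree reached by path `π`: the root corresponds to all of `X`, the left child of a node
to the states of the node satisfying its predicate, and the right child to those
not satisfying it.  Invalid paths correspond to `∅`. -/
def DT.statesAt : DT Var A → Set (Var → ℤ) → List Bool → Set (Var → ℤ)
  | _, X, [] => X
  | .node v b l _, X, true :: p => l.statesAt {s ∈ X | s v ≤ b} p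
  | .node v b _ r, X, false :: p => r.statesAt {s ∈ X | ¬ s v ≤ b} p
  | .leaf _, _, _ :: _ => ∅

open Classical in
/-- The policy induced by a decision tree: play the action of the leaf the state is
routed to if it is available (`Av s` is the set of available actions in state `s`),
and otherwise fall back to the random action `astar`. -/
noncomputable def inducedPolicy (Av : (Var → ℤ) → Set A) (astar : A)
    (t : DT Var A) (s : Var → ℤ) : A :=
  if t.eval s ∈ Av s then t.eval s else astar

/-- The skeleton (topology) of a binary tree: the underlying tree `T` of a tree
template, forgetting all labels. -/
inductive Skel : Type
  | leaf
  | node (l r : Skel)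

/-- `sk.IsInnerAt π` holds iff the path `π` (`true` = left) leads from the root
to an inner node of the skeleton. -/
def Skel.IsInnerAt : Skel → List Bool → Prop
  | .node _ _, [] => True
  | .node l _, true :: p => l.IsInnerAt p
  | .node _ r, false :: p => r.IsInnerAt p
  | _, _ => False

/-- `sk.IsLeafAt π` holds iff the path `π` leads from the root to a leaf
of the skeleton. -/
def Skel.IsLeafAt : Skel → List Bool → Prop
  | .leaf, [] => True
  | .node l _, true :: p => l.IsLeafAt p
  | .node _ r, false :: p => r.IsLeafAt p
  | _, _ => False

/-- A parameterization `f = (δ̂, β, α̂)` of a tree template: a variable-selection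
function, a bound-selection function (on inner nodes, addressed by root-to-node
paths) and an action-selection function (on leaves). -/
structure Param (Var A : Type) where
  dvar : List Bool → Var
  bound : List Bool → ℤ
  act : List Bool → A

/-- The decision tree `𝒫(f)` instantiated from the skeleton by the
parameterization `f`: the inner node at address `p` carries the predicate
`v_{δ̂(p)} ≤ β(p)`, the leaf at address `p` carries the action `α̂(p)`. -/
def Skel.build : Skel → Param Var A → List Bool → DT Var A
  | .leaf, f, p => .leaf (f.act p)
  | .node l r, f, p =>
      .node (f.dvar p) (f.bound p) (l.build f (p ++ [true])) (r.build f (p ++ [false]))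

/-- A rectangular set of parameterizations `F`: for each inner node a set of allowed
variables and a set of allowed bounds, and for each leaf a set of allowed actions. -/
structure FamSet (Var A : Type) where
  dvarS : List Bool → Set Var
  boundS : List Bool → Set ℤ
  actS : List Bool → Set A

/-- `f ∈ F`: the parameterization `f` belongs to the rectangular set `F`
(equivalently, `f` satisfies the formula `dom(F)`). -/
def memF (sk : Skel) (F : FamSet Var A) (f : Param Var A) : Prop :=
  (∀ p, sk.IsInnerAt p → f.dvar p ∈ F.dvarS p ∧ f.bound p ∈ F.boundS p) ∧
  (∀ p, sk.IsLeafAt p → f.act p ∈ F.actS p)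

/-- For a root-to-node path, the list of (proper prefix, direction taken) pairs:
the inner nodes visited along the path together with the direction in which
the path continues. -/
def pathSteps : List Bool → List (List Bool × Bool)
  | [] => []
  | d :: p => ([], d) :: (pathSteps p).map fun q => (d :: q.1, q.2)

/-- The relation `▷` used in the selection formula: `≤` when the path goes left,
`>` when it goes right. -/
def dirRel : Bool → ℤ → ℤ → Prop
  | true, x, b => x ≤ b
  | false, x, b => x > b

/-- The selection formula `φ^sel_{s,n}` (with the parameterization `f` substituted
for the variables `δ̂_n, β_n`): state `s` is routed along the path `n`, i.e. at every
inner node on the path the value of the selected variable satisfies the required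
inequality. -/
def phiSel (f : Param Var A) (s : Var → ℤ) (n : List Bool) : Prop :=
  ∀ q ∈ pathSteps n, dirRel q.2 (s (f.dvar q.1)) (f.bound q.1)

/-- The action-choice formula `φ^act_{s,a,n}` (with `f` substituted): the leaf `n`
selects action `a`; for the random action `a = α*` the leaf may also select any
action unavailable in `s`. -/
def phiActAt (Av : (Var → ℤ) → Set A) (astar : A) (f : Param Var A)
    (s : Var → ℤ) (a : A) (n : List Bool) : Prop :=
  (a = astar ∧ (f.act n = astar ∨ f.act n ∉ Av s)) ∨ (a ≠ astar ∧ f.act n = a)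

/-- The action-choice formula `φ^act_{s,a}` (with `f` substituted): every leaf to
which `s` is routed selects action `a` in the sense of `φ^act_{s,a,n}`. -/
def phiAct (sk : Skel) (Av : (Var → ℤ) → Set A) (astar : A) (f : Param Var A)
    (s : Var → ℤ) (a : A) : Prop :=
  ∀ n, sk.IsLeafAt n → phiSel f s n → phiActAt Av astar f s a n

open Classical in
/-- The routing path of state `s` through the tree built from skeleton `sk` with
parameterization `f`, when the tree is rooted at address `p`. -/
noncomputable def Skel.route : Skel → Param Var A → (Var → ℤ) → List Bool → List Bool
  | .leaf, _, _, _ => []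
  | .node l r, f, s, p =>
      if s (f.dvar p) ≤ f.bound p then true :: l.route f s (p ++ [true])
      else false :: r.route f s (p ++ [false])

theorem eval_build (sk : Skel) (f : Param Var A) (s : Var → ℤ) (p : List Bool) :
    (sk.build f p).eval s = f.act (p ++ sk.route f s p) := by
  induction sk generalizing p with
  | leaf => simp [Skel.build, Skel.route, DT.eval]
  | node l r ihl ihr =>
    simp only [Skel.build, Skel.route, DT.eval]
    by_cases h : s (f.dvar p) ≤ f.bound p
    · simp [h, ihl, List.append_assoc]
    · simp [h, ihr, List.append_assoc]

theorem isLeafAt_route (sk : Skel) (f : Param Var A) (s : Var → ℤ) (p : List Bool) :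
    sk.IsLeafAt (sk.route f s p) := by
  induction sk generalizing p with
  | leaf => simp [Skel.route, Skel.IsLeafAt]
  | node l r ihl ihr =>
    simp only [Skel.route]
    by_cases h : s (f.dvar p) ≤ f.bound p
    · simpa [h, Skel.IsLeafAt] using ihl (p ++ [true])
    · simpa [h, Skel.IsLeafAt] using ihr (p ++ [false])

theorem phiSel_route (sk : Skel) (f : Param Var A) (s : Var → ℤ) (p : List Bool) :
    ∀ q ∈ pathSteps (sk.route f s p),
      dirRel q.2 (s (f.dvar (p ++ q.1))) (f.bound (p ++ q.1)) := by
  induction sk generalizing p with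
  | leaf => simp [Skel.route, pathSteps]
  | node l r ihl ihr =>
    simp only [Skel.route]
    by_cases h : s (f.dvar p) ≤ f.bound p
    · simp only [if_pos h, pathSteps, List.mem_cons, List.mem_map]
      rintro q (rfl | ⟨q', hq', rfl⟩)
      · simpa [dirRel] using h
      · simpa [List.append_assoc] using ihl (p ++ [true]) q' hq'
    · simp only [if_neg h, pathSteps, List.mem_cons, List.mem_map]
      rintro q (rfl | ⟨q', hq', rfl⟩)
      · simpa [dirRel] using lt_of_not_ge h
      · simpa [List.append_assoc] using ihr (p ++ [false]) q' hq'

theorem route_unique (sk : Skel) (f : Param Var A) (s : Var → ℤ) (p n : List Bool)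
    (hn : sk.IsLeafAt n)
    (hsel : ∀ q ∈ pathSteps n, dirRel q.2 (s (f.dvar (p ++ q.1))) (f.bound (p ++ q.1))) :
    n = sk.route f s p := by
  induction sk generalizing p n with
  | leaf =>
    cases n with
    | nil => simp [Skel.route]
    | cons d n' => cases d <;> exact absurd hn (by simp [Skel.IsLeafAt])
  | node l r ihl ihr =>
    cases n with
    | nil => exact absurd hn (by simp [Skel.IsLeafAt])
    | cons d n' =>
      have h0 := hsel ([], d) (by simp [pathSteps])
      cases d with
      | true =>
        have hle : s (f.dvar p) ≤ f.bound p := by simpa [dirRel] using h0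
        simp only [Skel.route, if_pos hle]
        congr 1
        exact ihl (p ++ [true]) n' hn (fun q hq => by
          simpa [List.append_assoc] using
            hsel (true :: q.1, q.2) (by simp only [pathSteps]; exact List.mem_cons_of_mem _ (List.mem_map_of_mem hq)))
      | false =>
        have hgt : ¬ s (f.dvar p) ≤ f.bound p := not_le.mpr (by simpa [dirRel] using h0)
        simp only [Skel.route, if_neg hgt]
        congr 1
        exact ihr (p ++ [false]) n' hn (fun q hq => by
          simpa [List.append_assoc] using
            hsel (false :: q.1, q.2) (by simp only [pathSteps]; exact List.mem_cons_of_mem _ (List.mem_map_of_mem hq)))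

theorem phiAct_iff {Var A : Type} (Av : (Var → ℤ) → Set A) (astar : A)
    (hstar : ∀ s, astar ∈ Av s) (sk : Skel) (f : Param Var A)
    (s : Var → ℤ) (a : A) (ha : a ∈ Av s) :
    phiAct sk Av astar f s a ↔ a = inducedPolicy Av astar (sk.build f []) s := by
  set n₀ := sk.route f s [] with hn₀
  have heval : (sk.build f []).eval s = f.act n₀ := by
    simpa using eval_build sk f s []
  have hleaf : sk.IsLeafAt n₀ := isLeafAt_route sk f s []
  have hsel : phiSel f s n₀ := by
    intro q hq; simpa using phiSel_route sk f s [] q hq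
  constructor
  · intro h
    have hact := h n₀ hleaf hsel
    unfold inducedPolicy
    rw [heval]
    rcases hact with ⟨rfl, h2 | h2⟩ | ⟨_, h2⟩
    · rw [h2]; simp [hstar]
    · rw [if_neg h2]
    · rw [h2, if_pos ha]
  · intro h n hleafn hseln
    have : n = n₀ := route_unique sk f s [] n hleafn (fun q hq => by simpa using hseln q hq)
    subst this
    unfold inducedPolicy at h
    rw [heval] at h
    by_cases hmem : f.act n₀ ∈ Av s
    · rw [if_pos hmem] at h
      by_cases hstar' : a = astar
      · exact Or.inl ⟨hstar', Or.inl (h.symm.trans hstar')⟩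
      · exact Or.inr ⟨hstar', h.symm⟩
    · rw [if_neg hmem] at h
      exact Or.inl ⟨h, Or.inr hmem⟩

/-- Let `σ` be a policy, `s` a state, and `f₁, f₂` parameterizations
(`f₁` evaluating the unprimed and `f₂` the primed parameters).  Then `(f₁, f₂)`
satisfies the disjunction `φ^act_{s,σ(s)} ∨ φ'^act_{s,σ(s)}` iff
`σ(s) ∈ {σ_{𝒫(f₁)}(s), σ_{𝒫(f₂)}(s)}`. -/
theorem phiAct_or_iff {Var A : Type}
    (S : Set (Var → ℤ)) (Av : (Var → ℤ) → Set A) (astar : A)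
    (hstar : ∀ s, astar ∈ Av s)
    (sk : Skel) (f₁ f₂ : Param Var A) (σ : (Var → ℤ) → A)
    (hσ : ∀ s ∈ S, σ s ∈ Av s) (s : Var → ℤ) (hs : s ∈ S) :
    (phiAct sk Av astar f₁ s (σ s) ∨ phiAct sk Av astar f₂ s (σ s)) ↔
      (σ s = inducedPolicy Av astar (sk.build f₁ []) s ∨
       σ s = inducedPolicy Av astar (sk.build f₂ []) s) := by
  rw [phiAct_iff Av astar hstar sk f₁ s (σ s) (hσ s hs),
      phiAct_iff Av astar hstar sk f₂ s (σ s) (hσ s hs)]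

end Paper9
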